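/- Let 𝒜 be an abelian category equipped with a ring homomorphism R → End(id_𝒜), π ∈ R, and let a ≤ b be integers. Let P^• be a complex of projective objects of 𝒜 and let f : M^• → N^• be a π-quasi-isomorphism of cochain complexes in 𝒜, and assume P^i, M^i and N^i vanish for all i ∉ [a,b]. Then the map Hom_{K(𝒜)}(P^•, M^•) → Hom_{K(𝒜)}(P^•, N^•) induced by composition with f is a π^{2(b−a+3)}-isomorphism of R-modules. -/

import Mathlib

open CategoryTheory CategoryTheory.Limits


section Helpers

variable {R : Type*} [CommRing R] {A : Type*} [Category A] [Abelian A]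
  [CategoryTheory.Linear R A]

lemma null_of_retract {X Y : A} (u : X ⟶ Y) (v : Y ⟶ X) (huv : u ≫ v = 𝟙 X) (r : R)
    (h : r • 𝟙 Y = 0) : r • 𝟙 X = 0 := by
  have : r • 𝟙 X = u ≫ (r • 𝟙 Y) ≫ v := by
    simp [huv]
  rw [this, h, zero_comp, comp_zero]

lemma null_of_iso {X Y : A} (e : X ≅ Y) (r : R) (h : r • 𝟙 X = 0) : r • 𝟙 Y = 0 :=
  null_of_retract e.inv e.hom e.inv_hom_id r h

lemma comp_null {X Y Z : A} (u : X ⟶ Y) (v : Y ⟶ Z) (r : R) (h : r • 𝟙 Y = 0) :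
    r • (u ≫ v) = 0 := by
  have : r • (u ≫ v) = u ≫ (r • 𝟙 Y) ≫ v := by
    simp
  rw [this, h, zero_comp, comp_zero]

lemma kernel_null_of_square {X Y X' Y' : A} (α : X ⟶ Y) (β : X' ⟶ Y') (eX : X ≅ X')
    (eY : Y ≅ Y') (hcomm : α ≫ eY.hom = eX.hom ≫ β) (r : R)
    (h : r • 𝟙 (kernel β) = 0) : r • 𝟙 (kernel α) = 0 := by
  have hcomm' : β ≫ eY.inv = eX.inv ≫ α := by
    rw [Iso.comp_inv_eq, Category.assoc, hcomm, Iso.inv_hom_id_assoc]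
  refine null_of_retract (kernel.lift β (kernel.ι α ≫ eX.hom) ?_)
    (kernel.lift α (kernel.ι β ≫ eX.inv) ?_) ?_ r h
  · rw [Category.assoc, ← hcomm, reassoc_of% kernel.condition α, zero_comp]
  · rw [Category.assoc, ← hcomm', reassoc_of% kernel.condition β, zero_comp]
  · ext
    simp

lemma cokernel_null_of_square {X Y X' Y' : A} (α : X ⟶ Y) (β : X' ⟶ Y') (eX : X ≅ X')
    (eY : Y ≅ Y') (hcomm : α ≫ eY.hom = eX.hom ≫ β) (r : R)
    (h : r • 𝟙 (cokernel β) = 0) : r • 𝟙 (cokernel α) = 0 := by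
  have hcomm' : β ≫ eY.inv = eX.inv ≫ α := by
    rw [Iso.comp_inv_eq, Category.assoc, hcomm, Iso.inv_hom_id_assoc]
  refine null_of_retract (cokernel.desc α (eY.hom ≫ cokernel.π β) ?_)
    (cokernel.desc β (eY.inv ≫ cokernel.π α) ?_) ?_ r h
  · rw [← Category.assoc, hcomm, Category.assoc, cokernel.condition, comp_zero]
  · rw [← Category.assoc, hcomm', Category.assoc, cokernel.condition, comp_zero]
  · ext
    simp

/-- Abstract LES lemma. -/
lemma null_of_exact {X Y Z W V : A} (φ : X ⟶ Y) (g : Y ⟶ Z) (δ : Z ⟶ W) (ψ : W ⟶ V)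
    (h1 : φ ≫ g = 0) (h2 : δ ≫ ψ = 0) (hzero : g ≫ δ = 0)
    (hex : (ShortComplex.mk g δ hzero).Exact) (r : R)
    (hk : r • 𝟙 (cokernel φ) = 0) (hq : r • 𝟙 (kernel ψ) = 0) :
    (r * r) • 𝟙 Z = 0 := by
  have hg : r • g = 0 := by
    have hgd : g = cokernel.π φ ≫ cokernel.desc φ g h1 := by simp
    rw [hgd, ← Linear.comp_smul]  -- r • g = π ≫ (r • desc)
    have : (r : R) • cokernel.desc φ g h1 = (r • 𝟙 (cokernel φ)) ≫ cokernel.desc φ g h1 := by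
      rw [Linear.smul_comp, Category.id_comp]
    rw [this, hk, zero_comp, comp_zero]
  have hδ : r • δ = 0 := by
    have hdd : δ = kernel.lift ψ δ h2 ≫ kernel.ι ψ := by simp
    rw [hdd, ← Linear.comp_smul]
    have : (r : R) • kernel.ι ψ = (r • 𝟙 (kernel ψ)) ≫ kernel.ι ψ := by
      rw [Linear.smul_comp, Category.id_comp]
    rw [this, hq, zero_comp, comp_zero]
  set S := ShortComplex.mk g δ hzero with hS
  have hepi : Epi S.toCycles := hex.epi_toCycles
  have hi : r • S.iCycles = 0 := by
    rw [← cancel_epi S.toCycles, comp_zero, Linear.comp_smul, S.toCycles_i]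
    exact hg
  have hlift : (r • 𝟙 Z) ≫ S.g = 0 := by
    rw [Linear.smul_comp, Category.id_comp]
    exact hδ
  have : (r * r) • 𝟙 Z = r • (S.liftCycles (r • 𝟙 Z) hlift ≫ S.iCycles) := by
    rw [S.liftCycles_i, smul_smul]
  rw [this, ← Linear.comp_smul, hi, comp_zero]

end Helpers

section LemmaB

variable {R : Type*} [CommRing R] {A : Type*} [Category A] [Abelian A]
  [CategoryTheory.Linear R A]

/-- Scaling a homotopy. -/
def Homotopy.smulOfLinear {K L : CochainComplex A ℤ} (r : R) {e e' : K ⟶ L}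
    (h : Homotopy e e') : Homotopy (r • e) (r • e') where
  hom i j := r • h.hom i j
  zero i j hij := by rw [h.zero i j hij, smul_zero]
  comm i := by
    have hc := h.comm i
    have hd : dNext i (fun i j => r • h.hom i j) = r • dNext i h.hom := by
      dsimp [dNext]
      exact Linear.comp_smul _ _ _ _ _ _
    have hp : prevD i (fun i j => r • h.hom i j) = r • prevD i h.hom := by
      dsimp [prevD]
      exact Linear.smul_comp _ _ _ _ _ _
    rw [HomologicalComplex.smul_f_apply, HomologicalComplex.smul_f_apply, hd, hp, hc]
    simp [smul_add]

/-- Key degreewise lifting: kill the top component of a chain map up to homotopy. -/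
lemma exists_lift_of_null_homology {P C : CochainComplex A ℤ} (u : P ⟶ C) (j : ℤ)
    [Projective (P.X j)] (r : R) (hC : r • 𝟙 (C.homology j) = 0)
    (hu : u.f (j + 1) = 0) :
    ∃ s : P.X j ⟶ C.X (j - 1), s ≫ C.d (j - 1) j = r • u.f j := by
  have hdu : u.f j ≫ C.d j (j + 1) = 0 := by
    rw [u.comm j (j + 1), hu, comp_zero]
  set z := C.liftCycles (u.f j) (j + 1) (by simp) hdu with hz
  have hzπ : (r • z) ≫ C.homologyπ j = 0 := by
    rw [Linear.smul_comp]
    have : z ≫ C.homologyπ j ≫ (r • 𝟙 (C.homology j)) = z ≫ C.homologyπ j ≫ 0 := by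
      rw [hC]
    simpa using this
  have hex : (ShortComplex.mk (C.toCycles (j - 1) j) (C.homologyπ j)
      (C.toCycles_comp_homologyπ (j-1) j)).Exact :=
    ShortComplex.exact_of_g_is_cokernel _ (C.homologyIsCokernel (j - 1) j (by simp))
  refine ⟨hex.liftFromProjective (r • z) hzπ, ?_⟩
  have := hex.liftFromProjective_comp (r • z) hzπ
  dsimp at this
  have h2 : (hex.liftFromProjective (r • z) hzπ ≫ C.toCycles (j - 1) j) ≫ C.iCycles j =
      (r • z) ≫ C.iCycles j := by rw [this]
  rw [Category.assoc, HomologicalComplex.toCycles_i, Linear.smul_comp] at h2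
  simpa [hz] using h2

end LemmaB

section LemmaB2

variable {R : Type*} [CommRing R] {A : Type*} [Category A] [Abelian A]
  [CategoryTheory.Linear R A]

lemma homotopy_zero_of_null_homology {P C : CochainComplex A ℤ}
    (hP : ∀ i, Projective (P.X i)) (c : ℤ) (hPz : ∀ i, i < c → IsZero (P.X i))
    (r : R) (hC : ∀ n : ℤ, r • 𝟙 (C.homology n) = 0) :
    ∀ (m : ℕ) (u : P ⟶ C), (∀ i : ℤ, c + m ≤ i → u.f i = 0) →
      Nonempty (Homotopy (r ^ m • u) 0) := by
  intro m
  induction m with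
  | zero =>
    intro u hu
    have : u = 0 := by
      ext i
      by_cases hi : i < c
      · exact (hPz i hi).eq_of_src _ _
      · exact hu i (by push_cast; omega)
    exact ⟨Homotopy.ofEq (by rw [this, pow_zero, one_smul])⟩
  | succ m ih =>
    intro u hu
    set j : ℤ := c + m with hj
    haveI := hP j
    obtain ⟨s, hs⟩ := exists_lift_of_null_homology u j r (hC j)
      (hu (j + 1) (by omega))
    -- hom for null homotopic correction
    set hom : ∀ i i' : ℤ, P.X i ⟶ C.X i' := fun i i' =>
      if h : i = j ∧ i' = j - 1 then
        eqToHom (by rw [h.1]) ≫ s ≫ eqToHom (by rw [h.2]) else 0 with hhom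
    have homzero : ∀ i i' : ℤ, ¬ (i = j ∧ i' = j - 1) → hom i i' = 0 := by
      intro i i' hii'
      simp only [hhom, dif_neg hii']
    have homjj : hom j (j - 1) = s := by
      simp [hhom]
    set N : P ⟶ C := Homotopy.nullHomotopicMap hom with hN
    have hNf : ∀ i : ℤ, N.f i = P.d i (i + 1) ≫ hom (i + 1) i + hom i (i - 1) ≫ C.d (i - 1) i := by
      intro i
      rw [hN, Homotopy.nullHomotopicMap_f (show (ComplexShape.up ℤ).Rel (i-1) i by simp)
        (show (ComplexShape.up ℤ).Rel i (i+1) by simp)]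
    have hNj : N.f j = r • u.f j := by
      rw [hNf j, homjj, hs, homzero (j + 1) j (by rintro ⟨h1, h2⟩; omega), comp_zero, zero_add]
    have hNother : ∀ i : ℤ, j < i → N.f i = 0 := by
      intro i hi
      rw [hNf i, homzero (i + 1) i (by rintro ⟨h1, h2⟩; omega), homzero i (i - 1) (by rintro ⟨h1, h2⟩; omega),
        comp_zero, zero_comp, add_zero]
    set w : P ⟶ C := r • u - N with hw
    have hwzero : ∀ i : ℤ, c + m ≤ i → w.f i = 0 := by
      intro i hi
      by_cases hij : i = j
      · subst hij
        simp [hw, hNj]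
      · have h1 : u.f i = 0 := hu i (by push_cast at hi ⊢; omega)
        have h2 : N.f i = 0 := hNother i (by omega)
        simp [hw, h1, h2]
    obtain ⟨H1⟩ := ih w hwzero
    have H2 : Homotopy (r ^ m • N) 0 :=
      (Homotopy.nullHomotopy hom (fun i i' hii' => homzero i i' (by
        simp only [ComplexShape.up_Rel] at hii'
        rintro ⟨h1, h2⟩; exact hii' (by omega)))).smulOfLinear (r ^ m) |>.trans (Homotopy.ofEq (smul_zero _))
    have key : r ^ (m + 1) • u = r ^ m • w + r ^ m • N := by
      rw [hw, smul_sub, sub_add_cancel, smul_smul, ← pow_succ]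
    exact ⟨(Homotopy.ofEq key).trans ((H1.add H2).trans (Homotopy.ofEq (add_zero 0)))⟩

end LemmaB2

section Cone

variable {R : Type*} [CommRing R] {A : Type*} [Category A] [Abelian A]
  [CategoryTheory.Linear R A]

open HomotopyCategory CochainComplex Pretriangulated

lemma cone_homology_null {M N : CochainComplex A ℤ} (f : M ⟶ N) (π : R)
    (hf : ∀ n : ℤ, π • 𝟙 (kernel (HomologicalComplex.homologyMap f n)) = 0 ∧
      π • 𝟙 (cokernel (HomologicalComplex.homologyMap f n)) = 0) (n : ℤ) :
    (π * π) • 𝟙 ((CochainComplex.mappingCone f).homology n) = 0 := by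
  set F := HomotopyCategory.homologyFunctor A (ComplexShape.up ℤ) 0 with hF
  set T := CochainComplex.mappingCone.triangleh f with hT0
  have hT : T ∈ distTriang (HomotopyCategory A (ComplexShape.up ℤ)) :=
    HomotopyCategory.mappingCone_triangleh_distinguished f
  have comm : ∀ (m : ℤ),
      (F.shift m).map T.mor₁ ≫ (homologyFunctorFactors A (ComplexShape.up ℤ) m).hom.app N =
        (homologyFunctorFactors A (ComplexShape.up ℤ) m).hom.app M ≫
          HomologicalComplex.homologyMap f m :=
    fun m => (homologyFunctorFactors A (ComplexShape.up ℤ) m).hom.naturality f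
  have hker : π • 𝟙 (kernel ((F.shift (n + 1)).map T.mor₁)) = 0 :=
    kernel_null_of_square _ _ ((homologyFunctorFactors A (ComplexShape.up ℤ) (n + 1)).app M)
      ((homologyFunctorFactors A (ComplexShape.up ℤ) (n + 1)).app N) (comm (n + 1)) π
      (hf (n + 1)).1
  have hcoker : π • 𝟙 (cokernel ((F.shift n).map T.mor₁)) = 0 :=
    cokernel_null_of_square _ _ ((homologyFunctorFactors A (ComplexShape.up ℤ) n).app M)
      ((homologyFunctorFactors A (ComplexShape.up ℤ) n).app N) (comm n) π (hf n).2
  have h1 : (F.shift n).map T.mor₁ ≫ (F.shift n).map T.mor₂ = 0 := by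
    rw [← Functor.map_comp, comp_distTriang_mor_zero₁₂ T hT, Functor.map_zero]
  have key := null_of_exact ((F.shift n).map T.mor₁) ((F.shift n).map T.mor₂)
    (F.homologySequenceδ T n (n + 1) rfl) ((F.shift (n + 1)).map T.mor₁)
    h1 (F.homologySequenceδ_comp T hT n (n + 1) rfl) (F.comp_homologySequenceδ T hT n (n + 1) rfl)
    (F.homologySequence_exact₃ T hT n (n + 1) rfl) π hcoker hker
  exact null_of_iso ((homologyFunctorFactors A (ComplexShape.up ℤ) n).app
    (CochainComplex.mappingCone f)) (π * π) key

end Cone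

section Shift

variable {R : Type*} [CommRing R] {A : Type*} [Category A] [Abelian A]
  [CategoryTheory.Linear R A]

lemma shift_homology_null (K : CochainComplex A ℤ) (s : ℤ) (r : R)
    (h : ∀ n : ℤ, r • 𝟙 (K.homology n) = 0) (n : ℤ) :
    r • 𝟙 ((K⟦s⟧).homology n) = 0 :=
  null_of_iso (((HomologicalComplex.homologyFunctor A (ComplexShape.up ℤ) 0).shiftIso
    s n (s + n) rfl).app K).symm r (h (s + n))

end Shift


open HomotopyCategory CochainComplex Pretriangulated in
/-- **Corollary 3.5.** Let `𝒜` be an abelian category equipped with a ring homomorphism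
`R → End(id_𝒜)` (e.g. an `R`-linear abelian category, where `π ∈ R` acts on each object `X` as
`π • 𝟙 X`), `a ≤ b` integers, `P^•` a complex of projective objects and `f : M^• ⟶ N^•` a
`π`-quasi-isomorphism (i.e. each `H^n(f)` has `π`-null kernel and cokernel), with `P^i`, `M^i`,
`N^i` vanishing for `i ∉ [a, b]`. Then the map
`Hom_{K(𝒜)}(P^•, M^•) → Hom_{K(𝒜)}(P^•, N^•)` induced by `f` is a `π^{2(b-a+3)}`-isomorphism of
`R`-modules: its kernel and cokernel are annihilated by `π^{2(b-a+3)}`. -/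
theorem hom_homotopyCategory_pi_iso {R : Type*} [CommRing R] {A : Type*} [Category A]
    [Abelian A] [CategoryTheory.Linear R A] (π : R) (a b : ℤ) (hab : a ≤ b)
    {P M N : CochainComplex A ℤ} (f : M ⟶ N)
    (hP : ∀ i : ℤ, Projective (P.X i))
    (hPz : ∀ i : ℤ, i < a ∨ b < i → IsZero (P.X i))
    (hMz : ∀ i : ℤ, i < a ∨ b < i → IsZero (M.X i))
    (hNz : ∀ i : ℤ, i < a ∨ b < i → IsZero (N.X i))
    (hf : ∀ n : ℤ, π • 𝟙 (kernel (HomologicalComplex.homologyMap f n)) = 0 ∧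
      π • 𝟙 (cokernel (HomologicalComplex.homologyMap f n)) = 0) :
    (∀ x : (HomotopyCategory.quotient A (ComplexShape.up ℤ)).obj P ⟶
        (HomotopyCategory.quotient A (ComplexShape.up ℤ)).obj M,
      x ≫ (HomotopyCategory.quotient A (ComplexShape.up ℤ)).map f = 0 →
        π ^ (2 * (b - a + 3)).toNat • x = 0) ∧
    (∀ y : (HomotopyCategory.quotient A (ComplexShape.up ℤ)).obj P ⟶
        (HomotopyCategory.quotient A (ComplexShape.up ℤ)).obj N,
      ∃ x : (HomotopyCategory.quotient A (ComplexShape.up ℤ)).obj P ⟶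
          (HomotopyCategory.quotient A (ComplexShape.up ℤ)).obj M,
        π ^ (2 * (b - a + 3)).toNat • y =
          x ≫ (HomotopyCategory.quotient A (ComplexShape.up ℤ)).map f) := by
  set T := CochainComplex.mappingCone.triangleh f with hT0
  have hT : T ∈ distTriang (HomotopyCategory A (ComplexShape.up ℤ)) :=
    HomotopyCategory.mappingCone_triangleh_distinguished f
  have hcone : ∀ n : ℤ, (π * π) • 𝟙 ((CochainComplex.mappingCone f).homology n) = 0 :=
    cone_homology_null f π hf
  set m : ℕ := (b + 1 - a).toNat with hm
  have hm' : (m : ℤ) = b + 1 - a := Int.toNat_of_nonneg (by omega)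
  set e : ℕ := (2 * (b - a + 3)).toNat with he
  have he' : (e : ℤ) = 2 * (b - a + 3) := Int.toNat_of_nonneg (by omega)
  have hme : 2 * m ≤ e := by omega
  have hpow : π ^ e = π ^ (e - 2 * m) * (π * π) ^ m := by
    rw [← pow_two, ← pow_mul, ← pow_add]
    congr 1
    omega
  have main : ∀ (C : CochainComplex A ℤ), (∀ n : ℤ, (π * π) • 𝟙 (C.homology n) = 0) →
      ∀ (u : P ⟶ C), (π * π) ^ m •
        (HomotopyCategory.quotient A (ComplexShape.up ℤ)).map u = 0 := by
    intro C hC u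
    have hu : ∀ i : ℤ, a + (m : ℤ) ≤ i → u.f i = 0 := by
      intro i hi
      exact (hPz i (Or.inr (by omega))).eq_of_src _ _
    obtain ⟨H⟩ := homotopy_zero_of_null_homology hP a (fun i hi => hPz i (Or.inl hi))
      (π * π) hC m u hu
    have h0 := HomotopyCategory.eq_of_homotopy _ _ H
    rw [Functor.map_smul] at h0
    simpa using h0
  constructor
  · intro x hx
    obtain ⟨y, hy⟩ := Triangle.coyoneda_exact₂ _ (inv_rot_of_distTriang T hT) x hx
    set y' := y ≫ ((HomotopyCategory.quotient A (ComplexShape.up ℤ)).commShiftIso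
      (-1 : ℤ)).inv.app (CochainComplex.mappingCone f) with hy'
    obtain ⟨u, hu⟩ := (HomotopyCategory.quotient A (ComplexShape.up ℤ)).map_surjective y'
    have h0 : (π * π) ^ m • y' = 0 := by
      rw [← hu]
      exact main _ (shift_homology_null _ (-1) (π * π) hcone) u
    have h1 : (π * π) ^ m • y = 0 := by
      have hyy : y = y' ≫ ((HomotopyCategory.quotient A (ComplexShape.up ℤ)).commShiftIso
          (-1 : ℤ)).hom.app (CochainComplex.mappingCone f) := by
        rw [hy']
        exact ((Category.assoc _ _ _).trans ((congrArg (fun z => y ≫ z) (Iso.inv_hom_id_app ((HomotopyCategory.quotient A (ComplexShape.up ℤ)).commShiftIso (-1 : ℤ)) (CochainComplex.mappingCone f))).trans (Category.comp_id y))).symm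
      rw [hyy]
      exact (Linear.smul_comp _ _ _ _ _ _).symm.trans (by rw [h0, zero_comp]; rfl)
    have h2 : (π * π) ^ m • x = 0 := by
      rw [hy]
      exact (Linear.smul_comp _ _ _ _ _ _).symm.trans (by rw [h1, zero_comp]; rfl)
    have : π ^ e • x = π ^ (e - 2 * m) • ((π * π) ^ m • x) := by
      rw [smul_smul, ← hpow]
    rw [this, h2, smul_zero]
  · intro y
    obtain ⟨u, hu⟩ := (HomotopyCategory.quotient A (ComplexShape.up ℤ)).map_surjective
      (y ≫ T.mor₂)
    have h0 : (π * π) ^ m • (y ≫ T.mor₂) = 0 := by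
      exact hu ▸ main _ hcone u
    have h1 : ((π * π) ^ m • y) ≫ T.mor₂ = 0 := by
      exact (Linear.smul_comp _ _ _ _ _ _).trans h0
    obtain ⟨x, hx⟩ := Triangle.coyoneda_exact₂ T hT ((π * π) ^ m • y) h1
    refine ⟨π ^ (e - 2 * m) • x, ?_⟩
    have e1 : π ^ e • y = π ^ (e - 2 * m) • ((π * π) ^ m • y) := by rw [smul_smul, ← hpow]
    exact e1.trans ((congrArg (fun z => π ^ (e - 2 * m) • z) hx).trans (Linear.smul_comp _ _ _ _ _ _).symm)
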